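/- Fix positive integers k and t with t < k. For every ε > 0 there exists n₀ such that for all n > n₀ and every integer ℓ with α(G(n,k,t)) < ℓ ≤ C(n,k), one has ρ_{n,k,t}(ℓ) ≤ (1+ε) · (ℓ²/n^t) · (t!/2) · C(k,t)². -/

import Mathlib

open Finset



/-- The number of unordered pairs of distinct sets `F₁, F₂ ∈ F` with `|F₁ ∩ F₂| = t`. -/
def rhoPairs (t : ℕ) (F : Finset (Finset ℕ)) : ℕ :=
  ((F.powersetCard 2).filter
    (fun P => ∃ A ∈ P, ∃ B ∈ P, A ≠ B ∧ (A ∩ B).card = t)).card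

lemma powersetCard_two_eq (S F : Finset (Finset ℕ)) (hF : F ⊆ S) :
    F.powersetCard 2 = (S.powersetCard 2).filter (fun P => P ⊆ F) := by
  ext P
  simp only [Finset.mem_powersetCard, Finset.mem_filter]
  exact ⟨fun h => ⟨⟨h.1.trans hF, h.2⟩, h.1⟩, fun h => ⟨h.2, h.1.2⟩⟩

lemma rho_eq (t : ℕ) (S F : Finset (Finset ℕ)) (hF : F ⊆ S) :
    rhoPairs t F = ((S.powersetCard 2).filter
      (fun P => P ⊆ F ∧ ∃ A ∈ P, ∃ B ∈ P, A ≠ B ∧ (A ∩ B).card = t)).card := by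
  rw [rhoPairs, powersetCard_two_eq S F hF, Finset.filter_filter]

lemma count_supersets {ℓ : ℕ} (S P : Finset (Finset ℕ)) (hPS : P ⊆ S) (hP2 : P.card = 2) :
    ((S.powersetCard ℓ).filter (fun F => P ⊆ F)).card ≤ (S.card - 2).choose (ℓ - 2) := by
  have h : ((S.powersetCard ℓ).filter (fun F => P ⊆ F)).card
      ≤ ((S \ P).powersetCard (ℓ - 2)).card := by
    apply Finset.card_le_card_of_injOn (fun F => F \ P)
    · intro F hF
      simp only [Finset.mem_coe, Finset.mem_filter, Finset.mem_powersetCard] at hF ⊢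
      refine ⟨sdiff_subset_sdiff hF.1.1 le_rfl, ?_⟩
      rw [Finset.card_sdiff_of_subset hF.2, hF.1.2, hP2]
    · intro F1 h1 F2 h2 h12
      simp only [Finset.coe_filter, Set.mem_setOf_eq] at h1 h2
      have e1 := Finset.sdiff_union_of_subset h1.2
      have e2 := Finset.sdiff_union_of_subset h2.2
      simp only at h12
      rw [← e1, ← e2, h12]
  rwa [Finset.card_powersetCard, Finset.card_sdiff_of_subset hPS, hP2] at h

lemma sum_rho_le (t ℓ : ℕ) (S : Finset (Finset ℕ)) :
    ∑ F ∈ S.powersetCard ℓ, rhoPairs t F ≤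
      ((S.powersetCard 2).filter
        (fun P => ∃ A ∈ P, ∃ B ∈ P, A ≠ B ∧ (A ∩ B).card = t)).card
        * (S.card - 2).choose (ℓ - 2) := by
  have h1 : ∀ F ∈ S.powersetCard ℓ, rhoPairs t F = ∑ P ∈ S.powersetCard 2,
      if (P ⊆ F ∧ ∃ A ∈ P, ∃ B ∈ P, A ≠ B ∧ (A ∩ B).card = t) then 1 else 0 := by
    intro F hF
    rw [Finset.mem_powersetCard] at hF
    rw [rho_eq t S F hF.1, Finset.card_filter]
  rw [Finset.sum_congr rfl h1, Finset.sum_comm]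
  have h2 : ∀ P ∈ S.powersetCard 2, (∑ F ∈ S.powersetCard ℓ,
      if (P ⊆ F ∧ ∃ A ∈ P, ∃ B ∈ P, A ≠ B ∧ (A ∩ B).card = t) then 1 else 0)
      ≤ if (∃ A ∈ P, ∃ B ∈ P, A ≠ B ∧ (A ∩ B).card = t)
          then (S.card - 2).choose (ℓ - 2) else 0 := by
    intro P hP
    rw [Finset.mem_powersetCard] at hP
    by_cases hc : ∃ A ∈ P, ∃ B ∈ P, A ≠ B ∧ (A ∩ B).card = t
    · simp only [hc, and_true, if_true]
      calc ∑ F ∈ S.powersetCard ℓ, (if P ⊆ F then 1 else 0)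
          = ((S.powersetCard ℓ).filter (fun F => P ⊆ F)).card := by
            rw [Finset.card_filter]
        _ ≤ (S.card - 2).choose (ℓ - 2) := count_supersets S P hP.1 hP.2
    · simp [hc]
  calc ∑ P ∈ S.powersetCard 2, ∑ F ∈ S.powersetCard ℓ,
        (if (P ⊆ F ∧ ∃ A ∈ P, ∃ B ∈ P, A ≠ B ∧ (A ∩ B).card = t) then 1 else 0)
      ≤ ∑ P ∈ S.powersetCard 2,
        if (∃ A ∈ P, ∃ B ∈ P, A ≠ B ∧ (A ∩ B).card = t)
          then (S.card - 2).choose (ℓ - 2) else 0 := Finset.sum_le_sum h2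
    _ = _ := by
        rw [← Finset.sum_filter, Finset.sum_const, smul_eq_mul]

lemma fiber_le (n k t : ℕ) (A : Finset ℕ) (hA : A ⊆ Finset.Icc 1 n) (hAk : A.card = k)
    (O : Finset (Finset ℕ × Finset ℕ))
    (hO : ∀ p ∈ O, p.1 = A ∧ p.2 ⊆ Finset.Icc 1 n ∧ p.2.card = k ∧ (p.1 ∩ p.2).card = t) :
    O.card ≤ k.choose t * (n - k).choose (k - t) := by
  have h : O.card ≤ ((A.powersetCard t) ×ˢ (((Finset.Icc 1 n) \ A).powersetCard (k - t))).card := by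
    apply Finset.card_le_card_of_injOn (fun p => (A ∩ p.2, p.2 \ A))
    · intro p hp
      obtain ⟨h1, h2, h3, h4⟩ := hO p hp
      rw [h1] at h4
      simp only [Finset.mem_coe, Finset.mem_product, Finset.mem_powersetCard]
      refine ⟨⟨Finset.inter_subset_left, h4⟩, Finset.sdiff_subset_sdiff h2 le_rfl, ?_⟩
      rw [← Finset.sdiff_inter_self_left, Finset.card_sdiff_of_subset Finset.inter_subset_left, h3,
        Finset.inter_comm, h4]
    · intro p hp q hq hpq
      obtain ⟨hp1, _, _, _⟩ := hO p (by simpa using hp)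
      obtain ⟨hq1, _, _, _⟩ := hO q (by simpa using hq)
      simp only [Prod.mk.injEq] at hpq
      have e : p.2 = q.2 := by
        have ep : p.2 = p.2 \ A ∪ p.2 ∩ A := (Finset.sdiff_union_inter _ _).symm
        have eq' : q.2 = q.2 \ A ∪ q.2 ∩ A := (Finset.sdiff_union_inter _ _).symm
        rw [ep, eq', Finset.inter_comm p.2 A, Finset.inter_comm q.2 A, hpq.1, hpq.2]
      exact Prod.ext (hp1.trans hq1.symm) e
  rwa [Finset.card_product, Finset.card_powersetCard, Finset.card_powersetCard, hAk,
    Finset.card_sdiff_of_subset hA, Nat.card_Icc, hAk, Nat.add_sub_cancel] at h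

lemma edge_bound (n k t : ℕ) :
    2 * ((((Finset.Icc 1 n).powersetCard k).powersetCard 2).filter
        (fun P => ∃ A ∈ P, ∃ B ∈ P, A ≠ B ∧ (A ∩ B).card = t)).card
      ≤ n.choose k * (k.choose t * (n - k).choose (k - t)) := by
  set S := (Finset.Icc 1 n).powersetCard k with hS
  set E := ((S.powersetCard 2).filter
      (fun P => ∃ A ∈ P, ∃ B ∈ P, A ≠ B ∧ (A ∩ B).card = t)) with hE
  set O := (S ×ˢ S).filter (fun p => p.1 ≠ p.2 ∧ (p.1 ∩ p.2).card = t) with hO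
  have memS : ∀ A ∈ S, A ⊆ Finset.Icc 1 n ∧ A.card = k := by
    intro A hA; rwa [hS, Finset.mem_powersetCard] at hA
  have memO : ∀ p ∈ O, p.1 ∈ S ∧ p.2 ∈ S ∧ p.1 ≠ p.2 ∧ (p.1 ∩ p.2).card = t := by
    intro p hp
    rw [hO, Finset.mem_filter, Finset.mem_product] at hp
    exact ⟨hp.1.1, hp.1.2, hp.2.1, hp.2.2⟩
  -- step 1 : O.card = 2 * E.card
  have maps : ∀ p ∈ O, ({p.1, p.2} : Finset (Finset ℕ)) ∈ E := by
    intro p hp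
    obtain ⟨h1, h2, h3, h4⟩ := memO p hp
    rw [hE, Finset.mem_filter, Finset.mem_powersetCard]
    refine ⟨⟨?_, Finset.card_pair h3⟩, p.1, by simp, p.2, by simp, h3, h4⟩
    intro X hX
    rcases Finset.mem_insert.1 hX with h | h
    · rwa [h]
    · rw [Finset.mem_singleton] at h; rwa [h]
  have step1 : O.card = 2 * E.card := by
    rw [Finset.card_eq_sum_card_fiberwise maps]
    have hfib : ∀ P ∈ E, (O.filter (fun p => ({p.1, p.2} : Finset (Finset ℕ)) = P)).card = 2 := by
      intro P hP
      rw [hE, Finset.mem_filter, Finset.mem_powersetCard] at hP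
      obtain ⟨⟨hPS, hP2⟩, hcond⟩ := hP
      obtain ⟨a, b, hab, rfl⟩ := Finset.card_eq_two.1 hP2
      have haS : a ∈ S := hPS (by simp)
      have hbS : b ∈ S := hPS (by simp)
      have habt : (a ∩ b).card = t := by
        obtain ⟨A, hA, B, hB, hAB, hABt⟩ := hcond
        simp only [Finset.mem_insert, Finset.mem_singleton] at hA hB
        rcases hA with rfl | rfl <;> rcases hB with rfl | rfl
        · exact absurd rfl hAB
        · exact hABt
        · rwa [Finset.inter_comm]
        · exact absurd rfl hAB
      have : O.filter (fun p => ({p.1, p.2} : Finset (Finset ℕ)) = {a, b})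
          = {(a, b), (b, a)} := by
        ext p
        simp only [Finset.mem_filter, Finset.mem_insert, Finset.mem_singleton]
        constructor
        · rintro ⟨hpO, hpP⟩
          obtain ⟨_, _, hne, _⟩ := memO p hpO
          have h1 : p.1 ∈ ({a, b} : Finset (Finset ℕ)) := hpP ▸ (by simp)
          have h2 : p.2 ∈ ({a, b} : Finset (Finset ℕ)) := hpP ▸ (by simp)
          simp only [Finset.mem_insert, Finset.mem_singleton] at h1 h2
          rcases h1 with h1 | h1 <;> rcases h2 with h2 | h2
          · exact absurd (h1.trans h2.symm) hne
          · exact Or.inl (Prod.ext h1 h2)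
          · exact Or.inr (Prod.ext h1 h2)
          · exact absurd (h1.trans h2.symm) hne
        · rintro (rfl | rfl)
          · refine ⟨?_, rfl⟩
            rw [hO, Finset.mem_filter, Finset.mem_product]
            exact ⟨⟨haS, hbS⟩, hab, habt⟩
          · refine ⟨?_, by rw [Finset.pair_comm]⟩
            rw [hO, Finset.mem_filter, Finset.mem_product]
            exact ⟨⟨hbS, haS⟩, hab.symm, by rwa [Finset.inter_comm]⟩
      rw [this]
      rw [Finset.card_insert_of_notMem (by simp [Prod.ext_iff, hab]), Finset.card_singleton]
    rw [Finset.sum_congr rfl hfib, Finset.sum_const, smul_eq_mul, mul_comm]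
  -- step 2 : O.card ≤ S.card * D
  have mapsfst : ∀ p ∈ O, p.1 ∈ S := fun p hp => (memO p hp).1
  have step2 : O.card ≤ S.card * (k.choose t * (n - k).choose (k - t)) := by
    rw [Finset.card_eq_sum_card_fiberwise mapsfst]
    calc ∑ A ∈ S, (O.filter (fun p => p.1 = A)).card
        ≤ ∑ _A ∈ S, k.choose t * (n - k).choose (k - t) := by
          apply Finset.sum_le_sum
          intro A hA
          obtain ⟨hA1, hA2⟩ := memS A hA
          apply fiber_le n k t A hA1 hA2
          intro p hp
          rw [Finset.mem_filter] at hp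
          obtain ⟨h1, h2, _, h4⟩ := memO p hp.1
          exact ⟨hp.2, (memS _ h2).1, (memS _ h2).2, h4⟩
      _ = S.card * (k.choose t * (n - k).choose (k - t)) := by
          rw [Finset.sum_const, smul_eq_mul]
  have hScard : S.card = n.choose k := by
    rw [hS, Finset.card_powersetCard, Nat.card_Icc, Nat.add_sub_cancel]
  rw [← hScard]
  omega


/-- The independence number of the generalized Johnson graph `G(n,k,t)`. -/
def alphaJ (n k t : ℕ) : ℕ :=
  ((((Finset.Icc 1 n).powersetCard k).powerset).filter
    (fun F => ∀ A ∈ F, ∀ B ∈ F, A ≠ B → (A ∩ B).card ≠ t)).sup Finset.card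

/-- `ρ_{n,k,t}(ℓ)`: the minimum of `ρ(F)` over families `F` of `k`-element subsets
of `[n]` with `|F| = ℓ`. -/
noncomputable def rhoMin (n k t ℓ : ℕ) : ℕ :=
  sInf { m : ℕ | ∃ F : Finset (Finset ℕ),
    F ⊆ (Finset.Icc 1 n).powersetCard k ∧ F.card = ℓ ∧ rhoPairs t F = m }

lemma one_le_alphaJ (n k t : ℕ) (hkn : k ≤ n) : 1 ≤ alphaJ n k t := by
  have hmem : ({Finset.Icc 1 k} : Finset (Finset ℕ)) ∈
      ((((Finset.Icc 1 n).powersetCard k).powerset).filter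
        (fun F => ∀ A ∈ F, ∀ B ∈ F, A ≠ B → (A ∩ B).card ≠ t)) := by
    rw [Finset.mem_filter, Finset.mem_powerset]
    constructor
    · rw [Finset.singleton_subset_iff, Finset.mem_powersetCard]
      exact ⟨Finset.Icc_subset_Icc_right hkn, by rw [Nat.card_Icc, Nat.add_sub_cancel]⟩
    · intro A hA B hB hAB
      rw [Finset.mem_singleton] at hA hB
      exact absurd (hA.trans hB.symm) hAB
  calc 1 = ({Finset.Icc 1 k} : Finset (Finset ℕ)).card := (Finset.card_singleton _).symm
    _ ≤ alphaJ n k t := Finset.le_sup (f := Finset.card) hmem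

lemma choose_identity (M m : ℕ) (h : m ≤ M) :
    (M + 2).choose (m + 2) * ((m + 2) * (m + 1)) = M.choose m * ((M + 2) * (M + 1)) := by
  have h1 : (M + 2) * (M + 1).choose (m + 1) = (M + 2).choose (m + 2) * (m + 2) :=
    Nat.add_one_mul_choose_eq (M + 1) (m + 1)
  have h2 : (M + 1) * M.choose m = (M + 1).choose (m + 1) * (m + 1) :=
    Nat.add_one_mul_choose_eq M m
  -- (M+2) * (M+1).choose (m+1) = (M+2).choose (m+2) * (m+2)
  -- (M+1) * M.choose m = (M+1).choose (m+1) * (m+1)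
  calc (M + 2).choose (m + 2) * ((m + 2) * (m + 1))
      = ((M + 2).choose (m + 2) * (m + 2)) * (m + 1) := by ring
    _ = ((M + 2) * (M + 1).choose (m + 1)) * (m + 1) := by rw [← h1]
    _ = (M + 2) * ((M + 1).choose (m + 1) * (m + 1)) := by ring
    _ = (M + 2) * ((M + 1) * M.choose m) := by rw [← h2]
    _ = M.choose m * ((M + 2) * (M + 1)) := by ring

lemma exists_good_family (n k t ℓ : ℕ) (hl : ℓ ≤ n.choose k) :
    ∃ F : Finset (Finset ℕ), F ⊆ (Finset.Icc 1 n).powersetCard k ∧ F.card = ℓ ∧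
      (rhoPairs t F : ℝ) * (n.choose k).choose ℓ ≤
        (((((Finset.Icc 1 n).powersetCard k).powersetCard 2).filter
          (fun P => ∃ A ∈ P, ∃ B ∈ P, A ≠ B ∧ (A ∩ B).card = t)).card : ℝ)
          * (n.choose k - 2).choose (ℓ - 2) := by
  set S := (Finset.Icc 1 n).powersetCard k with hS
  have hScard : S.card = n.choose k := by
    rw [hS, Finset.card_powersetCard, Nat.card_Icc, Nat.add_sub_cancel]
  have hne : (S.powersetCard ℓ).Nonempty :=
    Finset.powersetCard_nonempty.2 (by rw [hScard]; exact hl)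
  set e := ((S.powersetCard 2).filter
      (fun P => ∃ A ∈ P, ∃ B ∈ P, A ≠ B ∧ (A ∩ B).card = t)).card with he
  have hsum : ∑ F ∈ S.powersetCard ℓ, rhoPairs t F ≤ e * (n.choose k - 2).choose (ℓ - 2) := by
    have := sum_rho_le t ℓ S
    rwa [hScard] at this
  have hcard : (S.powersetCard ℓ).card = (n.choose k).choose ℓ := by
    rw [Finset.card_powersetCard, hScard]
  -- exists F with rhoPairs * (number of families) ≤ total
  by_contra hcon
  push_neg at hcon
  have hlt : ∀ F ∈ S.powersetCard ℓ,
      (e * (n.choose k - 2).choose (ℓ - 2) : ℝ) < rhoPairs t F * (n.choose k).choose ℓ := by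
    intro F hF
    rw [Finset.mem_powersetCard] at hF
    exact hcon F hF.1 hF.2
  have hbig : (((n.choose k).choose ℓ : ℝ)) * (e * (n.choose k - 2).choose (ℓ - 2))
      < ∑ F ∈ S.powersetCard ℓ, ((rhoPairs t F : ℝ) * (n.choose k).choose ℓ) := by
    have := Finset.sum_lt_sum_of_nonempty hne hlt
    rw [Finset.sum_const, hcard, nsmul_eq_mul] at this
    exact this
  have hle : ∑ F ∈ S.powersetCard ℓ, ((rhoPairs t F : ℝ) * (n.choose k).choose ℓ)
      ≤ (e * (n.choose k - 2).choose (ℓ - 2) : ℝ) * (n.choose k).choose ℓ := by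
    rw [← Finset.sum_mul]
    apply mul_le_mul_of_nonneg_right _ (by positivity)
    calc ∑ F ∈ S.powersetCard ℓ, (rhoPairs t F : ℝ)
        = ((∑ F ∈ S.powersetCard ℓ, rhoPairs t F : ℕ) : ℝ) := by push_cast; ring
      _ ≤ ((e * (n.choose k - 2).choose (ℓ - 2) : ℕ) : ℝ) := by exact_mod_cast hsum
      _ = _ := by push_cast; ring
  nlinarith [hbig, hle]

open Filter in
lemma eventually_good (k : ℕ) (hk : 0 < k) (ε : ℝ) (hε : 0 < ε) :
    ∃ n₀ : ℕ, ∀ n : ℕ, n₀ < n → k ≤ n ∧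
      ((n : ℝ)) ^ k ≤ (1 + ε) * (((n : ℝ) + 1 - (k : ℝ)) ^ k - (k.factorial : ℝ)) := by
  set g : ℝ → ℝ := fun x => (1 + ε) * ((1 - ((k : ℝ) - 1) * x) ^ k - (k.factorial : ℝ) * x ^ k)
    with hg
  have hgc : Continuous g := by fun_prop
  have h0 : g 0 = 1 + ε := by
    simp [hg, zero_pow hk.ne']
  have htend : Tendsto (fun n : ℕ => g (1 / (n : ℝ))) atTop (nhds (1 + ε)) := by
    rw [← h0]
    exact (hgc.tendsto 0).comp tendsto_one_div_atTop_nhds_zero_nat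
  have hev : ∀ᶠ n : ℕ in atTop, 1 < g (1 / (n : ℝ)) :=
    htend.eventually (eventually_gt_nhds (by linarith))
  have hev2 : ∀ᶠ n : ℕ in atTop, k ≤ n := eventually_ge_atTop k
  obtain ⟨n₀, hn₀⟩ := eventually_atTop.1 (hev.and hev2)
  refine ⟨n₀ + 1, fun n hn => ?_⟩
  obtain ⟨h1, h2⟩ := hn₀ n (by omega)
  refine ⟨h2, ?_⟩
  have hnpos : (0 : ℝ) < n := by
    have : 0 < n := by omega
    exact_mod_cast this
  have e1 : (1 - ((k : ℝ) - 1) * (1 / n)) * n = (n : ℝ) + 1 - k := by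
    field_simp
    ring
  have e2 : (1 / (n : ℝ)) * n = 1 := by field_simp
  have e1k : (1 - ((k : ℝ) - 1) * (1 / n)) ^ k * (n : ℝ) ^ k = ((n : ℝ) + 1 - k) ^ k := by
    rw [← mul_pow, e1]
  have e2k : ((1 : ℝ) / n) ^ k * (n : ℝ) ^ k = 1 := by rw [← mul_pow, e2, one_pow]
  have key : g (1 / (n : ℝ)) * (n : ℝ) ^ k
      = (1 + ε) * (((n : ℝ) + 1 - k) ^ k - (k.factorial : ℝ)) := by
    rw [hg]
    simp only
    linear_combination (1 + ε) * e1k - (1 + ε) * (k.factorial : ℝ) * e2k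
  have hpow : (0 : ℝ) < (n : ℝ) ^ k := pow_pos hnpos k
  calc ((n : ℝ)) ^ k = 1 * (n : ℝ) ^ k := (one_mul _).symm
    _ ≤ g (1 / (n : ℝ)) * (n : ℝ) ^ k := by
        exact mul_le_mul_of_nonneg_right (le_of_lt h1) hpow.le
    _ = _ := key

/-- Averaging upper bound: `ρ(ℓ) ≤ (1+o(1)) ⋅ (ℓ²/nᵗ) ⋅ (t!/2) ⋅ C(k,t)²`. -/
theorem rho_upper_averaging (k t : ℕ) (ht : 0 < t) (htk : t < k) :
    ∀ ε : ℝ, 0 < ε → ∃ n₀ : ℕ, ∀ n > n₀, ∀ ℓ : ℕ,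
      alphaJ n k t < ℓ → ℓ ≤ n.choose k →
      (rhoMin n k t ℓ : ℝ) ≤
        (1 + ε) * ((ℓ : ℝ) ^ 2 / (n : ℝ) ^ t) * ((t.factorial : ℝ) / 2)
          * ((k.choose t : ℝ)) ^ 2 := by
  intro ε hε
  have hk : 0 < k := ht.trans htk
  obtain ⟨n₀, hn₀⟩ := eventually_good k hk ε hε
  refine ⟨n₀, fun n hn ℓ hα hℓN => ?_⟩
  obtain ⟨hkn, hQ⟩ := hn₀ n hn
  have hℓ2 : 2 ≤ ℓ := by have := one_le_alphaJ n k t hkn; omega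
  set N := n.choose k with hN
  have hN2 : 2 ≤ N := hℓ2.trans hℓN
  obtain ⟨F, hFS, hFc, hFle⟩ := exists_good_family n k t ℓ hℓN
  have hmin : rhoMin n k t ℓ ≤ rhoPairs t F := Nat.sInf_le ⟨F, hFS, hFc, rfl⟩
  obtain ⟨eN, heN⟩ : ∃ m : ℕ, m = ((((Finset.Icc 1 n).powersetCard k).powersetCard 2).filter
      (fun P => ∃ A ∈ P, ∃ B ∈ P, A ≠ B ∧ (A ∩ B).card = t)).card := ⟨_, rfl⟩
  rw [← heN] at hFle
  -- real abbreviations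
  set r : ℝ := (rhoPairs t F : ℝ) with hr
  set L : ℝ := (ℓ : ℝ) with hL
  set Nr : ℝ := (N : ℝ) with hNr
  set D1 : ℝ := (k.choose t : ℝ) with hD1
  set D2 : ℝ := ((n - k).choose (k - t) : ℝ) with hD2
  have hLe2 : (2 : ℝ) ≤ L := by rw [hL]; exact_mod_cast hℓ2
  have hNre2 : (2 : ℝ) ≤ Nr := by rw [hNr]; exact_mod_cast hN2
  have hnpos : (0 : ℝ) < (n : ℝ) := by
    have : 0 < n := hk.trans_le hkn
    exact_mod_cast this
  have hClpos : (0 : ℝ) < (N.choose ℓ : ℝ) := by exact_mod_cast Nat.choose_pos hℓN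
  -- the choose identity
  have hidN : N.choose ℓ * (ℓ * (ℓ - 1)) = (N - 2).choose (ℓ - 2) * (N * (N - 1)) := by
    have h2 : ℓ - 2 + 2 = ℓ := by omega
    have h3 : N - 2 + 2 = N := by omega
    have h4 : ℓ - 2 + 1 = ℓ - 1 := by omega
    have h5 : N - 2 + 1 = N - 1 := by omega
    have := choose_identity (N - 2) (ℓ - 2) (by omega)
    rw [h2, h3, h4, h5] at this
    exact this
  have c1 : ((ℓ - 1 : ℕ) : ℝ) = L - 1 := by
    rw [hL]; exact_mod_cast Nat.cast_sub (by omega : 1 ≤ ℓ)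
  have c2 : ((N - 1 : ℕ) : ℝ) = Nr - 1 := by
    rw [hNr]; exact_mod_cast Nat.cast_sub (by omega : 1 ≤ N)
  have hidR : (N.choose ℓ : ℝ) * (L * (L - 1))
      = ((N - 2).choose (ℓ - 2) : ℝ) * (Nr * (Nr - 1)) := by
    rw [← c1, ← c2, hL, hNr]
    exact_mod_cast hidN
  -- step A
  have hA : r * (Nr * (Nr - 1)) ≤ (eN : ℝ) * (L * (L - 1)) := by
    apply le_of_mul_le_mul_right _ hClpos
    calc r * (Nr * (Nr - 1)) * (N.choose ℓ : ℝ)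
        = r * (N.choose ℓ : ℝ) * (Nr * (Nr - 1)) := by ring
      _ ≤ (eN : ℝ) * ((N - 2).choose (ℓ - 2) : ℝ) * (Nr * (Nr - 1)) := by
          apply mul_le_mul_of_nonneg_right hFle
          have h1 : (0:ℝ) ≤ Nr - 1 := by linarith
          have h2 : (0:ℝ) ≤ Nr := by linarith
          exact mul_nonneg h2 h1
      _ = (eN : ℝ) * (((N - 2).choose (ℓ - 2) : ℝ) * (Nr * (Nr - 1))) := by ring
      _ = (eN : ℝ) * ((N.choose ℓ : ℝ) * (L * (L - 1))) := by rw [← hidR]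
      _ = (eN : ℝ) * (L * (L - 1)) * (N.choose ℓ : ℝ) := by ring
  -- edge bound
  have hedgeR : 2 * (eN : ℝ) ≤ Nr * (D1 * D2) := by
    have h := edge_bound n k t
    rw [← heN] at h
    rw [hNr, hD1, hD2, hN]
    exact_mod_cast h
  clear hFle heN hα
  -- step B : cancel Nr
  have hB : 2 * r * (Nr - 1) ≤ D1 * D2 * L ^ 2 := by
    have hNpos : (0 : ℝ) < Nr := by linarith
    apply le_of_mul_le_mul_right _ hNpos
    have hL0 : (0:ℝ) ≤ L := by linarith
    have hL1 : (0:ℝ) ≤ L - 1 := by linarith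
    have hLL : L * (L - 1) ≤ L ^ 2 := by
      calc L * (L - 1) = L ^ 2 - L := by ring
        _ ≤ L ^ 2 := by linarith
    have hLLpos : (0 : ℝ) ≤ L * (L - 1) := mul_nonneg hL0 hL1
    have hrpos : (0 : ℝ) ≤ r := by rw [hr]; positivity
    calc 2 * r * (Nr - 1) * Nr = 2 * (r * (Nr * (Nr - 1))) := by ring
      _ ≤ 2 * ((eN : ℝ) * (L * (L - 1))) := by linarith
      _ = (2 * (eN : ℝ)) * (L * (L - 1)) := by ring
      _ ≤ (Nr * (D1 * D2)) * (L * (L - 1)) := mul_le_mul_of_nonneg_right hedgeR hLLpos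
      _ ≤ (Nr * (D1 * D2)) * L ^ 2 := by
          apply mul_le_mul_of_nonneg_left hLL
          rw [hNr, hD1, hD2]; positivity
      _ = D1 * D2 * L ^ 2 * Nr := by ring
  -- step C : key asymptotic bound
  have hC : D2 * (n : ℝ) ^ t ≤ (1 + ε) * (t.factorial : ℝ) * D1 * (Nr - 1) := by
    have hktpos : (0 : ℝ) < ((k - t).factorial : ℝ) := by
      exact_mod_cast Nat.factorial_pos (k - t)
    apply le_of_mul_le_mul_left _ hktpos
    have hdesc : (k - t).factorial * (n - k).choose (k - t) ≤ n ^ (k - t) := by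
      calc (k - t).factorial * (n - k).choose (k - t)
          = (n - k).descFactorial (k - t) :=
            (Nat.descFactorial_eq_factorial_mul_choose _ _).symm
        _ ≤ (n - k) ^ (k - t) := Nat.descFactorial_le_pow _ _
        _ ≤ n ^ (k - t) := Nat.pow_le_pow_left (Nat.sub_le n k) _
    have hdescR : ((k - t).factorial : ℝ) * D2 ≤ (n : ℝ) ^ (k - t) := by
      rw [hD2]; exact_mod_cast hdesc
    have hfact : ((k.choose t : ℝ)) * (t.factorial : ℝ) * ((k - t).factorial : ℝ)
        = (k.factorial : ℝ) := by
      exact_mod_cast Nat.choose_mul_factorial_mul_factorial htk.le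
    have hcastnk : (((n + 1 - k : ℕ)) : ℝ) = (n : ℝ) + 1 - (k : ℝ) := by
      have : k ≤ n + 1 := by omega
      push_cast [Nat.cast_sub this]
      ring
    have hpowle : ((n : ℝ) + 1 - (k : ℝ)) ^ k ≤ (k.factorial : ℝ) * Nr := by
      have h := Nat.pow_le_choose (α := ℝ) k n
      rw [div_le_iff₀ (by exact_mod_cast Nat.factorial_pos k)] at h
      calc ((n : ℝ) + 1 - (k : ℝ)) ^ k = (((n + 1 - k : ℕ)) : ℝ) ^ k := by rw [hcastnk]
        _ ≤ (n.choose k : ℝ) * (k.factorial : ℝ) := h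
        _ = (k.factorial : ℝ) * Nr := by rw [hNr, hN]; ring
    have hQ2 : (n : ℝ) ^ k ≤ (1 + ε) * (k.factorial : ℝ) * (Nr - 1) := by
      calc (n : ℝ) ^ k ≤ (1 + ε) * (((n : ℝ) + 1 - (k : ℝ)) ^ k - (k.factorial : ℝ)) := hQ
        _ ≤ (1 + ε) * ((k.factorial : ℝ) * Nr - (k.factorial : ℝ)) := by
            apply mul_le_mul_of_nonneg_left _ (by linarith)
            linarith
        _ = (1 + ε) * (k.factorial : ℝ) * (Nr - 1) := by ring
    have hpowsplit : (n : ℝ) ^ (k - t) * (n : ℝ) ^ t = (n : ℝ) ^ k := by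
      rw [← pow_add]
      congr 1
      omega
    calc ((k - t).factorial : ℝ) * (D2 * (n : ℝ) ^ t)
        = (((k - t).factorial : ℝ) * D2) * (n : ℝ) ^ t := by ring
      _ ≤ (n : ℝ) ^ (k - t) * (n : ℝ) ^ t := by
          apply mul_le_mul_of_nonneg_right hdescR (by positivity)
      _ = (n : ℝ) ^ k := hpowsplit
      _ ≤ (1 + ε) * (k.factorial : ℝ) * (Nr - 1) := hQ2
      _ = ((k - t).factorial : ℝ) * ((1 + ε) * (t.factorial : ℝ) * D1 * (Nr - 1)) := by
          rw [hD1, ← hfact]; ring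
  -- final assembly
  have hNr1 : (0 : ℝ) < Nr - 1 := by linarith
  have hD1pos : (0 : ℝ) ≤ D1 := by rw [hD1]; positivity
  have hfinal : 2 * r * (n : ℝ) ^ t ≤ (1 + ε) * L ^ 2 * (t.factorial : ℝ) * D1 ^ 2 := by
    apply le_of_mul_le_mul_right _ hNr1
    have hL2pos : (0 : ℝ) ≤ D1 * L ^ 2 := mul_nonneg hD1pos (sq_nonneg L)
    calc 2 * r * (n : ℝ) ^ t * (Nr - 1)
        = (2 * r * (Nr - 1)) * (n : ℝ) ^ t := by ring
      _ ≤ (D1 * D2 * L ^ 2) * (n : ℝ) ^ t :=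
          mul_le_mul_of_nonneg_right hB (by positivity)
      _ = (D1 * L ^ 2) * (D2 * (n : ℝ) ^ t) := by ring
      _ ≤ (D1 * L ^ 2) * ((1 + ε) * (t.factorial : ℝ) * D1 * (Nr - 1)) :=
          mul_le_mul_of_nonneg_left hC hL2pos
      _ = (1 + ε) * L ^ 2 * (t.factorial : ℝ) * D1 ^ 2 * (Nr - 1) := by ring
  have hre : (1 + ε) * (L ^ 2 / (n : ℝ) ^ t) * ((t.factorial : ℝ) / 2) * D1 ^ 2
      = ((1 + ε) * L ^ 2 * (t.factorial : ℝ) * D1 ^ 2) / (2 * (n : ℝ) ^ t) := by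
    rw [eq_div_iff (by positivity : (2 * (n : ℝ) ^ t) ≠ 0)]
    field_simp
    try ring
    try tauto
  calc (rhoMin n k t ℓ : ℝ) ≤ r := by rw [hr]; exact_mod_cast hmin
    _ ≤ (1 + ε) * (L ^ 2 / (n : ℝ) ^ t) * ((t.factorial : ℝ) / 2) * D1 ^ 2 := by
        rw [hre, le_div_iff₀ (by positivity)]
        calc r * (2 * (n : ℝ) ^ t) = 2 * r * (n : ℝ) ^ t := by ring
          _ ≤ _ := hfinal
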